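/- Let r ∈ {0,1}. If a vector (x_α, ..., x_1) is r-realizable, then every augmentation of it is r-realizable; that is, if (y_α, ..., y_1) satisfies x_i ≤ y_i for all 1 ≤ i ≤ α, then (y_α, ..., y_1) is also r-realizable. -/

import Mathlib

namespace CopsRobbers

variable {V : Type*}

/-- The closed neighborhood of `v` within the vertex set `S` (graphs are reflexive,
so `v` itself belongs to its closed neighborhood). -/
def closedNbhd (G : SimpleGraph V) (S : Set V) (v : V) : Set V :=
  {u | u ∈ S ∧ (u = v ∨ G.Adj u v)}

/-- `v` is a strict corner of the subgraph induced on `S`: some other vertex `w ∈ S`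
strictly corners `v`, i.e. `N[v] ⊊ N[w]` within `S`. -/
def StrictCorner (G : SimpleGraph V) (S : Set V) (v : V) : Prop :=
  v ∈ S ∧ ∃ w ∈ S, w ≠ v ∧ closedNbhd G S v ⊂ closedNbhd G S w

/-- The remaining vertex sets of the corner ranking procedure (0-indexed auxiliary
version): at each step all current strict corners are removed. -/
def stageAux (G : SimpleGraph V) : ℕ → Set V
  | 0 => Set.univ
  | n + 1 => stageAux G n \ {v | StrictCorner G (stageAux G n) v}

/-- `stage G k` is the vertex set of `G^(k)` (for `k ≥ 1`), so `stage G 1 = V(G)`. -/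
def stage (G : SimpleGraph V) (k : ℕ) : Set V := stageAux G (k - 1)

/-- The corner rank of a vertex: the least `k ≥ 1` such that `v` is a strict corner
of `G^(k)`, or `G^(k)` is a clique still containing `v`; and `⊤` (that is, `∞`) if
there is no such `k`. -/
noncomputable def cornerRank (G : SimpleGraph V) (v : V) : ℕ∞ :=
  sInf {k : ℕ∞ | ∃ n : ℕ, k = (n : ℕ∞) ∧ 1 ≤ n ∧
    (StrictCorner G (stage G n) v ∨ (G.IsClique (stage G n) ∧ v ∈ stage G n))}

/-- The corner rank of a graph: the largest corner rank of a vertex. -/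
noncomputable def graphRank (G : SimpleGraph V) : ℕ∞ := ⨆ v, cornerRank G v

/-- A graph is cop-win iff every vertex has finite corner rank. -/
def CopWin (G : SimpleGraph V) : Prop := ∀ v, cornerRank G v ≠ ⊤

/-- `v` dominates the set `S`: `v` is (reflexively) adjacent to every vertex of `S`. -/
def Dominates (G : SimpleGraph V) (v : V) (S : Set V) : Prop :=
  ∀ u ∈ S, u = v ∨ G.Adj v u

/-- A cop-win graph of corner rank `α ≥ 2` is `tp1` if some vertex of corner rank `α`
dominates the vertex set of `G^(α-1)`. -/
def Tp1 (G : SimpleGraph V) : Prop :=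
  ∃ α : ℕ, 2 ≤ α ∧ graphRank G = (α : ℕ∞) ∧
    ∃ v, cornerRank G v = (α : ℕ∞) ∧ Dominates G v (stage G (α - 1))

/-- `G` realizes the vector `(x_α, …, x_1)` (written as the list `[x_α, …, x_1]`):
`G` is cop-win of corner rank `α` and for each `k`, `x_k` is the number of vertices
of corner rank `k`. -/
def Realizes (G : SimpleGraph V) (x : List ℕ) : Prop :=
  CopWin G ∧ graphRank G = (x.length : ℕ∞) ∧
  ∀ i : Fin x.length,
    x.get i = {v | cornerRank G v = ((x.length - (i : ℕ) : ℕ) : ℕ∞)}.ncard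

/-- `G` r-realizes `x` (for `r ∈ {0,1}`): `G` realizes `x` and `G` is tp-r. -/
def RRealizes (G : SimpleGraph V) (r : ℕ) (x : List ℕ) : Prop :=
  Realizes G x ∧ (Tp1 G ↔ r = 1)

/-- A vector is realizable if it is the rank cardinality vector of some finite cop-win graph. -/
def Realizable (x : List ℕ) : Prop :=
  ∃ (W : Type) (_ : Fintype W) (G : SimpleGraph W), Realizes G x

/-- A vector is r-realizable if some finite tp-r cop-win graph realizes it. -/
def RRealizable (r : ℕ) (x : List ℕ) : Prop :=
  ∃ (W : Type) (_ : Fintype W) (G : SimpleGraph W), RRealizes G r x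

open Classical in
/-- The capture time of a cop-win graph: `cr(G) - r(G)`. -/
noncomputable def captureTime (G : SimpleGraph V) : ℕ :=
  (graphRank G).toNat - (if Tp1 G then 1 else 0)

end CopsRobbers
namespace CopsRobbers

variable {V : Type*}

/-- The set of candidate (natural-number) corner ranks of `v`. -/
def CRSet (G : SimpleGraph V) (v : V) : Set ℕ :=
  {n | 1 ≤ n ∧ (StrictCorner G (stage G n) v ∨ (G.IsClique (stage G n) ∧ v ∈ stage G n))}

lemma cornerRank_def (G : SimpleGraph V) (v : V) :
    cornerRank G v = sInf {k : ℕ∞ | ∃ n : ℕ, k = (n : ℕ∞) ∧ n ∈ CRSet G v} := by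
  rfl

lemma cornerRank_le {G : SimpleGraph V} {v : V} {n : ℕ} (h : n ∈ CRSet G v) :
    cornerRank G v ≤ (n : ℕ∞) := by
  rw [cornerRank_def]; exact sInf_le ⟨n, rfl, h⟩

lemma cornerRank_eq_top_iff {G : SimpleGraph V} {v : V} :
    cornerRank G v = ⊤ ↔ CRSet G v = ∅ := by
  rw [cornerRank_def]
  constructor
  · intro h
    ext n
    simp only [Set.mem_empty_iff_false, iff_false]
    intro hn
    have hmem : (n : ℕ∞) ∈ {k : ℕ∞ | ∃ m : ℕ, k = (m : ℕ∞) ∧ m ∈ CRSet G v} :=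
      ⟨n, rfl, hn⟩
    have := sInf_le hmem
    rw [h] at this
    exact absurd this (not_le.mpr (ENat.coe_lt_top n))
  · intro h
    rw [sInf_eq_top]
    rintro a ⟨n, rfl, hn⟩
    rw [h] at hn
    exact absurd hn (Set.notMem_empty n)

lemma cornerRank_eq_sInf {G : SimpleGraph V} {v : V} (h : (CRSet G v).Nonempty) :
    cornerRank G v = (↑(sInf (CRSet G v)) : ℕ∞) := by
  obtain ⟨n0, hn0⟩ : ∃ n0, sInf (CRSet G v) = n0 := ⟨_, rfl⟩
  rw [cornerRank_def, hn0]
  apply le_antisymm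
  · have hmem : (n0 : ℕ∞) ∈
        {k : ℕ∞ | ∃ m : ℕ, k = (m : ℕ∞) ∧ m ∈ CRSet G v} :=
      ⟨n0, rfl, hn0 ▸ Nat.sInf_mem h⟩
    exact sInf_le hmem
  · apply le_sInf
    rintro a ⟨n, rfl, hn⟩
    have := Nat.sInf_le hn
    rw [hn0] at this
    exact_mod_cast this

lemma cornerRank_spec {G : SimpleGraph V} {v : V} (h : cornerRank G v ≠ ⊤) :
    ∃ n : ℕ, cornerRank G v = (n : ℕ∞) ∧ n ∈ CRSet G v ∧ ∀ m ∈ CRSet G v, n ≤ m := by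
  have hne : (CRSet G v).Nonempty := by
    rw [Set.nonempty_iff_ne_empty]
    intro he
    exact h (cornerRank_eq_top_iff.mpr he)
  exact ⟨sInf (CRSet G v), cornerRank_eq_sInf hne, Nat.sInf_mem hne,
    fun m hm => Nat.sInf_le hm⟩

lemma stageAux_succ (G : SimpleGraph V) (n : ℕ) :
    stageAux G (n + 1) = stageAux G n \ {v | StrictCorner G (stageAux G n) v} := rfl

lemma stageAux_antitone (G : SimpleGraph V) : Antitone (stageAux G) := by
  apply antitone_nat_of_succ_le
  intro n
  rw [stageAux_succ]
  exact Set.diff_subset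

lemma stage_succ (G : SimpleGraph V) (n : ℕ) : stage G (n + 1) = stageAux G n := by
  simp [stage]

/-- A clique has no strict corners. -/
lemma IsClique.not_strictCorner {G : SimpleGraph V} {S : Set V}
    (h : G.IsClique S) (v : V) : ¬ StrictCorner G S v := by
  rintro ⟨hv, w, hw, hne, hsub⟩
  have key : ∀ u ∈ S, closedNbhd G S u = S := by
    intro u hu
    ext z
    simp only [closedNbhd, Set.mem_setOf_eq]
    constructor
    · exact fun hz => hz.1
    · intro hz
      refine ⟨hz, ?_⟩
      by_cases hzu : z = u
      · exact Or.inl hzu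
      · exact Or.inr (h hz hu hzu)
  rw [key v hv, key w hw] at hsub
  exact hsub.2 hsub.1

/-- If no vertex is a strict corner at stage `n`, the procedure stabilizes. -/
lemma stageAux_stab {G : SimpleGraph V} {n : ℕ}
    (h : ∀ v, ¬ StrictCorner G (stageAux G n) v) (m : ℕ) (hm : n ≤ m) :
    stageAux G m = stageAux G n := by
  induction m with
  | zero => rw [Nat.le_zero.mp hm]
  | succ k ih =>
    rcases Nat.lt_or_ge n (k+1) with hlt | hge
    · have hk : n ≤ k := by omega
      have := ih hk
      rw [stageAux_succ, this]
      have : {v | StrictCorner G (stageAux G n) v} = ∅ := by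
        ext v; simpa using h v
      rw [this, Set.diff_empty]
    · have : n = k + 1 := le_antisymm hm hge
      rw [this]

lemma not_mem_next_of_corner {G : SimpleGraph V} {n : ℕ} {v : V}
    (h : StrictCorner G (stageAux G n) v) : v ∉ stageAux G (n + 1) := by
  rw [stageAux_succ]
  exact fun hv => hv.2 h

lemma mem_stageAux_of {G : SimpleGraph V} {v : V} (n : ℕ)
    (h : ∀ m < n, ¬ StrictCorner G (stageAux G m) v) : v ∈ stageAux G n := by
  induction n with
  | zero => trivial
  | succ k ih =>
    rw [stageAux_succ]
    exact ⟨ih fun m hm => h m (by omega), h k (by omega)⟩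

lemma cr_le_of_corner {G : SimpleGraph V} {m : ℕ} {v : V}
    (h : StrictCorner G (stageAux G m) v) : cornerRank G v ≤ (m + 1 : ℕ) := by
  apply cornerRank_le
  exact ⟨by omega, Or.inl (by rwa [stage_succ])⟩

lemma mem_stageAux_of_lt_cr {G : SimpleGraph V} {n : ℕ} {v : V}
    (h : (n : ℕ∞) < cornerRank G v) : v ∈ stageAux G n := by
  apply mem_stageAux_of
  intro m hm hc
  have h1 := cr_le_of_corner hc
  have h2 : ((m + 1 : ℕ) : ℕ∞) ≤ (n : ℕ∞) := by exact_mod_cast by omega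
  exact absurd (h1.trans h2) (not_le.mpr h)

lemma exists_cornerRank_eq {G : SimpleGraph V} [Fintype V] (hcw : CopWin G)
    {α k : ℕ} (hα : graphRank G = (α : ℕ∞)) (h1 : 1 ≤ k) (h2 : k ≤ α) :
    ∃ v, cornerRank G v = (k : ℕ∞) := by
  -- V is nonempty
  have hV : Nonempty V := by
    by_contra hne
    rw [not_nonempty_iff] at hne
    rw [graphRank, iSup_of_empty] at hα
    simp only [eq_comm (a := (⊥ : ℕ∞))] at hα
    have : (α : ℕ∞) = 0 := hα
    rw [Nat.cast_eq_zero] at this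
    omega
  -- a vertex of maximal rank
  obtain ⟨v, hv⟩ := Finite.exists_max (cornerRank G)
  have hvα : cornerRank G v = (α : ℕ∞) := by
    rw [← hα, graphRank]
    exact le_antisymm (le_iSup _ v) (iSup_le hv)
  rcases Nat.lt_or_ge k α with hlt | hge
  swap
  · exact ⟨v, by rw [hvα]; congr 1; omega⟩
  obtain ⟨j, rfl⟩ : ∃ j, k = j + 1 := ⟨k - 1, by omega⟩
  have hjα : ((j : ℕ) : ℕ∞) < cornerRank G v := by
    rw [hvα]; exact_mod_cast by omega
  have hvj : v ∈ stageAux G j := mem_stageAux_of_lt_cr hjα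
  have hnotclique : ¬ G.IsClique (stageAux G j) := by
    intro hcl
    have hmem : (j + 1) ∈ CRSet G v :=
      ⟨by omega, Or.inr ⟨by rwa [stage_succ], by rwa [stage_succ]⟩⟩
    have := cornerRank_le hmem
    rw [hvα] at this
    have : α ≤ j + 1 := by exact_mod_cast this
    omega
  have hcorner : ∃ w, StrictCorner G (stageAux G j) w := by
    by_contra hno
    push_neg at hno
    apply hcw v
    rw [cornerRank_eq_top_iff]
    ext n
    simp only [Set.mem_empty_iff_false, iff_false]
    intro hn
    have hcle := cornerRank_le hn
    rw [hvα] at hcle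
    have hαn : α ≤ n := by exact_mod_cast hcle
    have hstab : stageAux G (n - 1) = stageAux G j :=
      stageAux_stab hno (n - 1) (by omega)
    have hstage : stage G n = stageAux G j := hstab
    rcases hn.2 with hc | hcl
    · rw [hstage] at hc
      exact hno v hc  -- wrong witness; fix below
    · rw [hstage] at hcl
      exact hnotclique hcl.1
  obtain ⟨w, hw⟩ := hcorner
  refine ⟨w, ?_⟩
  obtain ⟨n, hcrw, hnCR, hmin⟩ := cornerRank_spec (hcw w)
  have hwj : w ∈ stageAux G j := hw.1
  have hle : cornerRank G w ≤ ((j + 1 : ℕ) : ℕ∞) := cr_le_of_corner hw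
  have hnle : n ≤ j + 1 := by
    rw [hcrw] at hle; exact_mod_cast hle
  have hne : ¬ n ≤ j := by
    intro hnj
    have hn1 : 1 ≤ n := hnCR.1
    rcases hnCR.2 with hc | hcl
    · have : stage G n = stageAux G ((n - 1) + 1 - 1) := rfl
      have hnm : w ∉ stageAux G ((n - 1) + 1) := by
        apply not_mem_next_of_corner
        have : stage G n = stageAux G (n - 1) := rfl
        rwa [this] at hc
      have : (n - 1) + 1 = n := by omega
      rw [this] at hnm
      exact hnm (stageAux_antitone G (by omega : n ≤ j) hwj)
    · have hstage : stage G n = stageAux G (n - 1) := rfl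
      rw [hstage] at hcl
      have hno' : ∀ u, ¬ StrictCorner G (stageAux G (n - 1)) u :=
        IsClique.not_strictCorner hcl.1
      have hstab : stageAux G j = stageAux G (n - 1) :=
        stageAux_stab hno' j (by omega)
      have := IsClique.not_strictCorner hcl.1 w
      rw [← hstab] at this
      exact this hw
  have : n = j + 1 := by omega
  rw [hcrw, this]

section Blowup

variable (G : SimpleGraph V) (m : V → ℕ)

/-- The blowup of `G`: each vertex `v` is replaced by `m v` pairwise-adjacent
true twins. -/
def Blowup : SimpleGraph (Σ v : V, Fin (m v)) where
  Adj a b := (a.1 = b.1 ∧ a ≠ b) ∨ (a.1 ≠ b.1 ∧ G.Adj a.1 b.1)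
  symm := by
    constructor
    rintro a b (⟨h1, h2⟩ | ⟨h1, h2⟩)
    · exact Or.inl ⟨h1.symm, h2.symm⟩
    · exact Or.inr ⟨h1.symm, h2.symm⟩
  loopless := by
    constructor
    rintro a (⟨_, h⟩ | ⟨h, _⟩)
    · exact h rfl
    · exact h rfl

variable {G m}

lemma blowup_fst_surjective (hm : ∀ v, 1 ≤ m v) : Function.Surjective (Sigma.fst : (Σ v : V, Fin (m v)) → V) :=
  fun v => ⟨⟨v, ⟨0, hm v⟩⟩, rfl⟩

lemma blowup_preimage_subset_iff (hm : ∀ v, 1 ≤ m v) (A B : Set V) :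
    (Sigma.fst ⁻¹' A : Set (Σ v : V, Fin (m v))) ⊆ Sigma.fst ⁻¹' B ↔ A ⊆ B :=
  Set.preimage_subset_preimage_iff
    (by rw [(blowup_fst_surjective hm).range_eq]; exact Set.subset_univ _)

lemma blowup_preimage_ssubset_iff (hm : ∀ v, 1 ≤ m v) (A B : Set V) :
    (Sigma.fst ⁻¹' A : Set (Σ v : V, Fin (m v))) ⊂ Sigma.fst ⁻¹' B ↔ A ⊂ B := by
  rw [Set.ssubset_def, Set.ssubset_def, blowup_preimage_subset_iff hm,
    blowup_preimage_subset_iff hm]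

lemma blowup_closedNbhd (S : Set V) (a : Σ v : V, Fin (m v)) :
    closedNbhd (Blowup G m) (Sigma.fst ⁻¹' S) a = Sigma.fst ⁻¹' closedNbhd G S a.1 := by
  obtain ⟨v, i⟩ := a
  ext ⟨u, j⟩
  simp only [closedNbhd, Set.mem_setOf_eq, Set.mem_preimage, Blowup]
  apply and_congr_right
  intro _
  constructor
  · rintro (h | ⟨h1, h2⟩ | ⟨h1, h2⟩)
    · exact Or.inl (congrArg Sigma.fst h)
    · exact Or.inl h1
    · exact Or.inr h2
  · rintro (h | h)
    · subst h
      by_cases hij : j = i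
      · subst hij; exact Or.inl rfl
      · refine Or.inr (Or.inl ⟨rfl, ?_⟩)
        intro hcon
        exact hij (eq_of_heq (Sigma.mk.inj_iff.mp hcon).2)
    · by_cases huv : u = v
      · subst huv
        by_cases hij : j = i
        · subst hij; exact Or.inl rfl
        · refine Or.inr (Or.inl ⟨rfl, ?_⟩)
          intro hcon
          exact hij (eq_of_heq (Sigma.mk.inj_iff.mp hcon).2)
      · exact Or.inr (Or.inr ⟨huv, h⟩)

lemma blowup_strictCorner (hm : ∀ v, 1 ≤ m v) (S : Set V) (a : Σ v : V, Fin (m v)) :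
    StrictCorner (Blowup G m) (Sigma.fst ⁻¹' S) a ↔ StrictCorner G S a.1 := by
  constructor
  · rintro ⟨ha, b, hb, hne, hsub⟩
    rw [blowup_closedNbhd, blowup_closedNbhd, blowup_preimage_ssubset_iff hm] at hsub
    refine ⟨ha, b.1, hb, ?_, hsub⟩
    intro h
    rw [h] at hsub
    exact ssubset_irrefl _ hsub
  · rintro ⟨ha, w, hw, hne, hsub⟩
    refine ⟨ha, ⟨w, ⟨0, hm w⟩⟩, hw, ?_, ?_⟩
    · intro h
      exact hne (congrArg Sigma.fst h)
    · rw [blowup_closedNbhd, blowup_closedNbhd, blowup_preimage_ssubset_iff hm]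
      exact hsub

lemma blowup_stageAux (hm : ∀ v, 1 ≤ m v) (n : ℕ) :
    stageAux (Blowup G m) n = Sigma.fst ⁻¹' stageAux G n := by
  induction n with
  | zero => simp [stageAux]
  | succ k ih =>
    rw [stageAux_succ, stageAux_succ, ih]
    have hset : {a : Σ v : V, Fin (m v) | StrictCorner (Blowup G m) (Sigma.fst ⁻¹' stageAux G k) a}
        = Sigma.fst ⁻¹' {v | StrictCorner G (stageAux G k) v} := by
      ext a
      exact blowup_strictCorner hm _ a
    rw [hset, ← Set.preimage_diff]

lemma blowup_stage (hm : ∀ v, 1 ≤ m v) (n : ℕ) :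
    stage (Blowup G m) n = Sigma.fst ⁻¹' stage G n := blowup_stageAux hm _

lemma blowup_isClique (hm : ∀ v, 1 ≤ m v) (S : Set V) :
    (Blowup G m).IsClique (Sigma.fst ⁻¹' S) ↔ G.IsClique S := by
  constructor
  · intro h u hu w hw hne
    have := h (show (⟨u, ⟨0, hm u⟩⟩ : Σ v : V, Fin (m v)) ∈ _ from hu)
      (show (⟨w, ⟨0, hm w⟩⟩ : Σ v : V, Fin (m v)) ∈ _ from hw)
      (fun hcon => hne (congrArg Sigma.fst hcon))
    rcases this with ⟨h1, _⟩ | ⟨_, h2⟩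
    · exact absurd h1 hne
    · exact h2
  · rintro h ⟨u, i⟩ hu ⟨w, j⟩ hw hne
    by_cases huw : u = w
    · subst huw
      exact Or.inl ⟨rfl, hne⟩
    · exact Or.inr ⟨huw, h hu hw huw⟩

lemma blowup_CRSet (hm : ∀ v, 1 ≤ m v) (a : Σ v : V, Fin (m v)) :
    CRSet (Blowup G m) a = CRSet G a.1 := by
  ext n
  unfold CRSet
  simp only [Set.mem_setOf_eq]
  apply and_congr_right
  intro _
  rw [blowup_stage hm]
  apply or_congr
  · exact blowup_strictCorner hm _ a
  · exact and_congr (blowup_isClique hm _) Iff.rfl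

lemma blowup_cornerRank (hm : ∀ v, 1 ≤ m v) (a : Σ v : V, Fin (m v)) :
    cornerRank (Blowup G m) a = cornerRank G a.1 := by
  rw [cornerRank_def, cornerRank_def, blowup_CRSet hm]

lemma blowup_graphRank (hm : ∀ v, 1 ≤ m v) : graphRank (Blowup G m) = graphRank G := by
  unfold graphRank
  rw [iSup_sigma]
  refine iSup_congr fun v => ?_
  haveI : Nonempty (Fin (m v)) := ⟨⟨0, hm v⟩⟩
  simp only [blowup_cornerRank hm]
  exact iSup_const

lemma blowup_copWin (hm : ∀ v, 1 ≤ m v) (h : CopWin G) : CopWin (Blowup G m) := by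
  intro a
  rw [blowup_cornerRank hm]
  exact h a.1

lemma blowup_dominates (hm : ∀ v, 1 ≤ m v) (S : Set V) (a : Σ v : V, Fin (m v)) :
    Dominates (Blowup G m) a (Sigma.fst ⁻¹' S) ↔ Dominates G a.1 S := by
  obtain ⟨v, i⟩ := a
  constructor
  · intro h u hu
    rcases h ⟨u, ⟨0, hm u⟩⟩ hu with heq | hadj
    · exact Or.inl (congrArg Sigma.fst heq)
    · rcases hadj with ⟨h1, _⟩ | ⟨_, h2⟩
      · exact Or.inl h1.symm
      · exact Or.inr h2
  · rintro h ⟨u, j⟩ hu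
    by_cases huv : u = v
    · subst huv
      by_cases hij : j = i
      · subst hij; exact Or.inl rfl
      · refine Or.inr (Or.inl ⟨rfl, ?_⟩)
        intro hcon
        exact hij (eq_of_heq (Sigma.mk.inj_iff.mp hcon).2).symm
    · rcases h u hu with heq | hadj
      · exact absurd heq huv
      · exact Or.inr (Or.inr ⟨fun hc => huv hc.symm, hadj⟩)

lemma blowup_tp1 (hm : ∀ v, 1 ≤ m v) : Tp1 (Blowup G m) ↔ Tp1 G := by
  unfold Tp1
  apply exists_congr
  intro α
  rw [blowup_graphRank hm]
  apply and_congr_right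
  intro _
  apply and_congr_right
  intro _
  constructor
  · rintro ⟨a, h1, h2⟩
    rw [blowup_cornerRank hm] at h1
    rw [blowup_stage hm, blowup_dominates hm] at h2
    exact ⟨a.1, h1, h2⟩
  · rintro ⟨v, h1, h2⟩
    refine ⟨⟨v, ⟨0, hm v⟩⟩, ?_, ?_⟩
    · rw [blowup_cornerRank hm]; exact h1
    · rw [blowup_stage hm, blowup_dominates hm]; exact h2

lemma blowup_ncard [Fintype V] (T : Finset V) :
    {a : Σ v : V, Fin (m v) | a.1 ∈ T}.ncard = ∑ v ∈ T, m v := by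
  classical
  rw [← Nat.card_coe_set_eq]
  have e : ↑{a : Σ v : V, Fin (m v) | a.1 ∈ T} ≃ Σ x : {v : V // v ∈ T}, Fin (m x.1) :=
    Equiv.subtypeSigmaEquiv (fun v => Fin (m v)) (fun v => v ∈ T)
  rw [Nat.card_congr e, Nat.card_eq_fintype_card, Fintype.card_sigma]
  simp only [Fintype.card_fin]
  exact (Finset.sum_subtype T (fun v => Iff.rfl) m).symm

end Blowup

end CopsRobbers

/-- If a vector is r-realizable (r ∈ {0,1}), then so is any augmentation of it. -/
theorem CopsRobbers.augmentation_rRealizable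
    (r : ℕ) (hr : r ≤ 1) (x y : List ℕ) (hlen : x.length = y.length)
    (hle : ∀ i : Fin x.length, x.get i ≤ y.get (Fin.cast hlen i))
    (hx : CopsRobbers.RRealizable r x) :
    CopsRobbers.RRealizable r y := by
  classical
  obtain ⟨W, hW, G, ⟨⟨hcw, hrank, hcount⟩, htp⟩⟩ := hx
  haveI := hW
  -- choose, for each rank in [1, x.length], a vertex of that corner rank
  have hsel : ∀ i : Fin x.length,
      ∃ v : W, cornerRank G v = ((x.length - (i : ℕ) : ℕ) : ℕ∞) := by
    intro i
    have hi := i.isLt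
    exact exists_cornerRank_eq hcw hrank (by omega) (by omega)
  choose sel hselspec using hsel
  set d : Fin x.length → ℕ := fun i => y.get (Fin.cast hlen i) - x.get i with hd
  set m : W → ℕ := fun v => 1 + ∑ i : Fin x.length, if sel i = v then d i else 0 with hmdef
  have hm : ∀ v, 1 ≤ m v := fun v => Nat.le_add_right 1 _
  refine ⟨Σ v : W, Fin (m v), inferInstance, Blowup G m,
    ⟨⟨blowup_copWin hm hcw, ?_, ?_⟩, ?_⟩⟩
  · rw [blowup_graphRank hm, hrank, hlen]
  · intro i
    set i' : Fin x.length := Fin.cast hlen.symm i with hi'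
    have hii : Fin.cast hlen i' = i := rfl
    have hival : (i' : ℕ) = (i : ℕ) := rfl
    have hi := i.isLt
    have hi'lt : (i' : ℕ) < x.length := i'.isLt
    set c : ℕ := y.length - (i : ℕ) with hc
    have hcx : c = x.length - (i' : ℕ) := by omega
    set T : Finset W := {v : W | cornerRank G v = (c : ℕ∞)}.toFinset with hT
    have hset : {a : Σ v : W, Fin (m v) | cornerRank (Blowup G m) a = (c : ℕ∞)}
        = {a : Σ v : W, Fin (m v) | a.1 ∈ T} := by
      ext a
      simp only [Set.mem_setOf_eq, hT, Set.mem_toFinset, blowup_cornerRank hm]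
    show (y.get i = _)
    rw [hset, blowup_ncard]
    -- split the sum
    have hsplit : ∑ v ∈ T, m v
        = T.card + ∑ v ∈ T, ∑ j : Fin x.length, (if sel j = v then d j else 0) := by
      rw [hmdef]
      rw [Finset.sum_add_distrib, Finset.sum_const, smul_eq_mul, mul_one]
    rw [hsplit]
    -- the cardinality of T is x.get i'
    have hcard : T.card = x.get i' := by
      rw [hT, ← Set.ncard_eq_toFinset_card']
      rw [hcount i', hcx]
    -- evaluate the extras
    have hextra : ∑ v ∈ T, ∑ j : Fin x.length, (if sel j = v then d j else 0) = d i' := by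
      rw [Finset.sum_comm]
      have h1 : ∀ j : Fin x.length,
          (∑ v ∈ T, if sel j = v then d j else 0) = if j = i' then d j else 0 := by
        intro j
        rw [Finset.sum_ite_eq]
        congr 1
        have hmemT : sel j ∈ T ↔ j = i' := by
          rw [hT, Set.mem_toFinset, Set.mem_setOf_eq, hselspec j]
          constructor
          · intro h
            have : x.length - (j : ℕ) = c := by exact_mod_cast h
            have hj := j.isLt
            exact Fin.ext (by omega)
          · intro h
            subst h
            rw [hcx]
        simp only [eq_iff_iff]
        exact hmemT
      rw [Finset.sum_congr rfl fun j _ => h1 j]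
      rw [Finset.sum_ite_eq' Finset.univ i' d]
      simp
    rw [hextra, hcard]
    have hlei := hle i'
    rw [hii] at hlei
    have : d i' = y.get i - x.get i' := rfl
    omega
  · rw [blowup_tp1 hm]
    exact htp
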